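/- Let G = (ZMod 2) × D_8, where D_8 is the dihedral group of order 8. The set of even integers that are integer group determinants of G is exactly {2^16 · m : m ∈ ℤ}. -/

import Mathlib

/-- The group determinant of `a : G → R`: the determinant of the `|G| × |G|` matrix
whose `(g, h)` entry is `a (g * h⁻¹)`. -/
noncomputable def groupDet {G : Type*} [Group G] [Fintype G] [DecidableEq G]
    {R : Type*} [CommRing R] (a : G → R) : R :=
  Matrix.det (Matrix.of fun g h : G => a (g * h⁻¹))

/-- The set of integer group determinants of a finite group `G`. -/
def detSet (G : Type*) [Group G] [Fintype G] [DecidableEq G] : Set ℤ :=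
  {d : ℤ | ∃ a : G → ℤ, groupDet a = d}

open Matrix in
lemma det_block {n : Type*} [DecidableEq n] [Fintype n] (A B : Matrix n n ℤ) :
    (Matrix.fromBlocks A B B A).det = (A + B).det * (A - B).det := by
  have h : fromBlocks 1 0 1 1 * fromBlocks A B B A * fromBlocks 1 0 (-1) 1
      = fromBlocks (A - B) B 0 (A + B) := by
    rw [Matrix.fromBlocks_multiply, Matrix.fromBlocks_multiply]
    congr 1 <;> simp [sub_eq_add_neg] <;> abel
  have h2 := congrArg Matrix.det h
  simp only [Matrix.det_mul, Matrix.det_fromBlocks_zero₁₂, Matrix.det_fromBlocks_zero₂₁,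
    Matrix.det_one, one_mul, mul_one] at h2
  linarith [h2]

abbrev Z2 := Multiplicative (ZMod 2)

def z2e : Z2 := Multiplicative.ofAdd 1

lemma z2cases (ε : Z2) : ε = 1 ∨ ε = z2e := by
  revert ε; decide

lemma groupDet_Z2prod {H : Type*} [Group H] [Fintype H] [DecidableEq H]
    (a : Z2 × H → ℤ) :
    groupDet a = groupDet (fun h => a (1, h) + a (z2e, h)) *
      groupDet (fun h => a (1, h) - a (z2e, h)) := by
  classical
  let e : H ⊕ H ≃ Z2 × H :=
  { toFun := Sum.elim (fun h => (1, h)) (fun h => (z2e, h))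
    invFun := fun p => if p.1 = 1 then Sum.inl p.2 else Sum.inr p.2
    left_inv := by rintro (h | h) <;> simp [z2e]
    right_inv := by
      rintro ⟨ε, h⟩
      rcases z2cases ε with rfl | rfl
      · simp
      · simp [z2e] }
  unfold groupDet
  rw [← Matrix.det_submatrix_equiv_self e]
  have key : (Matrix.of fun g h : Z2 × H => a (g * h⁻¹)).submatrix e e =
      Matrix.fromBlocks (Matrix.of fun g h : H => a (1, g * h⁻¹))
        (Matrix.of fun g h : H => a (z2e, g * h⁻¹))
        (Matrix.of fun g h : H => a (z2e, g * h⁻¹))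
        (Matrix.of fun g h : H => a (1, g * h⁻¹)) := by
    ext p q
    rcases p with i | i <;> rcases q with j | j <;>
      simp [e, Matrix.fromBlocks, Prod.mk_mul_mk] <;>
      congr 1 <;> decide
  rw [key, det_block]
  congr 1 <;> { congr 1; ext g h; simp }

lemma det4a (s0 s1 s2 s3 : ℤ) :
    (Matrix.det !![s0,s1,s2,s3; s1,s0,s3,s2; s2,s3,s0,s1; s3,s2,s1,s0]) =
      ((s0+s1+s2+s3)*(s0+s1-s2-s3))*((s0-s1+s2-s3)*(s0-s1-s2+s3)) := by
  simp [Matrix.det_succ_row_zero, Fin.sum_univ_succ, Matrix.det_fin_three,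
    Fin.succAbove, Fin.castSucc, Fin.castAdd, Fin.castLE]
  ring

lemma det4b (p q P Q : ℤ) :
    (Matrix.det !![p,-q,P,Q; q,p,-Q,P; P,-Q,p,q; Q,P,-q,p]) =
      (p^2+q^2-P^2-Q^2)^2 := by
  simp [Matrix.det_succ_row_zero, Fin.sum_univ_succ, Matrix.det_fin_three,
    Fin.succAbove, Fin.castSucc, Fin.castAdd, Fin.castLE]
  ring

open DihedralGroup in
noncomputable def e8 : (Fin 4 ⊕ Fin 4) ≃ DihedralGroup 4 :=
  Equiv.ofBijective
    (Sum.elim (![r 0, r 1, sr 0, sr 1]) (![r 2, r 3, sr 2, sr 3]))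
    (by decide)

open DihedralGroup in
lemma groupDet_D8 (b : DihedralGroup 4 → ℤ) :
    groupDet b =
      (((b (r 0) + b (r 2)) + (b (r 1) + b (r 3)) + (b (sr 0) + b (sr 2)) + (b (sr 1) + b (sr 3))) *
       ((b (r 0) + b (r 2)) + (b (r 1) + b (r 3)) - (b (sr 0) + b (sr 2)) - (b (sr 1) + b (sr 3))) *
       (((b (r 0) + b (r 2)) - (b (r 1) + b (r 3)) + (b (sr 0) + b (sr 2)) - (b (sr 1) + b (sr 3))) *
       ((b (r 0) + b (r 2)) - (b (r 1) + b (r 3)) - (b (sr 0) + b (sr 2)) + (b (sr 1) + b (sr 3))))) *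
      ((b (r 0) - b (r 2))^2 + (b (r 1) - b (r 3))^2
        - (b (sr 0) - b (sr 2))^2 - (b (sr 1) - b (sr 3))^2)^2 := by
  unfold groupDet
  rw [← Matrix.det_submatrix_equiv_self e8]
  have key : (Matrix.of fun g h : DihedralGroup 4 => b (g * h⁻¹)).submatrix e8 e8 =
      Matrix.fromBlocks
        !![b (r 0), b (r 3), b (sr 0), b (sr 1);
           b (r 1), b (r 0), b (sr 3), b (sr 0);
           b (sr 0), b (sr 3), b (r 0), b (r 1);
           b (sr 1), b (sr 0), b (r 3), b (r 0)]
        !![b (r 2), b (r 1), b (sr 2), b (sr 3);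
           b (r 3), b (r 2), b (sr 1), b (sr 2);
           b (sr 2), b (sr 1), b (r 2), b (r 3);
           b (sr 3), b (sr 2), b (r 1), b (r 2)]
        !![b (r 2), b (r 1), b (sr 2), b (sr 3);
           b (r 3), b (r 2), b (sr 1), b (sr 2);
           b (sr 2), b (sr 1), b (r 2), b (r 3);
           b (sr 3), b (sr 2), b (r 1), b (r 2)]
        !![b (r 0), b (r 3), b (sr 0), b (sr 1);
           b (r 1), b (r 0), b (sr 3), b (sr 0);
           b (sr 0), b (sr 3), b (r 0), b (r 1);
           b (sr 1), b (sr 0), b (r 3), b (r 0)] := by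
    ext p q
    rcases p with i | i <;> rcases q with j | j <;> fin_cases i <;> fin_cases j <;>
      simp [e8, Equiv.ofBijective, Matrix.fromBlocks] <;>
      exact congrArg b (by decide)
  rw [key, det_block]
  have hadd : (!![b (r 0), b (r 3), b (sr 0), b (sr 1);
           b (r 1), b (r 0), b (sr 3), b (sr 0);
           b (sr 0), b (sr 3), b (r 0), b (r 1);
           b (sr 1), b (sr 0), b (r 3), b (r 0)] +
        !![b (r 2), b (r 1), b (sr 2), b (sr 3);
           b (r 3), b (r 2), b (sr 1), b (sr 2);
           b (sr 2), b (sr 1), b (r 2), b (r 3);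
           b (sr 3), b (sr 2), b (r 1), b (r 2)]) =
      !![b (r 0) + b (r 2), b (r 1) + b (r 3), b (sr 0) + b (sr 2), b (sr 1) + b (sr 3);
         b (r 1) + b (r 3), b (r 0) + b (r 2), b (sr 1) + b (sr 3), b (sr 0) + b (sr 2);
         b (sr 0) + b (sr 2), b (sr 1) + b (sr 3), b (r 0) + b (r 2), b (r 1) + b (r 3);
         b (sr 1) + b (sr 3), b (sr 0) + b (sr 2), b (r 1) + b (r 3), b (r 0) + b (r 2)] := by
    ext i j; fin_cases i <;> fin_cases j <;> simp <;> ring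
  have hsub : (!![b (r 0), b (r 3), b (sr 0), b (sr 1);
           b (r 1), b (r 0), b (sr 3), b (sr 0);
           b (sr 0), b (sr 3), b (r 0), b (r 1);
           b (sr 1), b (sr 0), b (r 3), b (r 0)] -
        !![b (r 2), b (r 1), b (sr 2), b (sr 3);
           b (r 3), b (r 2), b (sr 1), b (sr 2);
           b (sr 2), b (sr 1), b (r 2), b (r 3);
           b (sr 3), b (sr 2), b (r 1), b (r 2)]) =
      !![b (r 0) - b (r 2), -(b (r 1) - b (r 3)), b (sr 0) - b (sr 2), b (sr 1) - b (sr 3);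
         b (r 1) - b (r 3), b (r 0) - b (r 2), -(b (sr 1) - b (sr 3)), b (sr 0) - b (sr 2);
         b (sr 0) - b (sr 2), -(b (sr 1) - b (sr 3)), b (r 0) - b (r 2), b (r 1) - b (r 3);
         b (sr 1) - b (sr 3), b (sr 0) - b (sr 2), -(b (r 1) - b (r 3)), b (r 0) - b (r 2)] := by
    ext i j; fin_cases i <;> fin_cases j <;> simp <;> ring
  rw [hadd, hsub, det4a, det4b]

-- basic square-difference divisibility facts
lemma F1 {x y : ℤ} (hx : Odd x) (hy : Odd y) : (2:ℤ)^3 ∣ x^2 - y^2 := by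
  obtain ⟨k, rfl⟩ := hx
  obtain ⟨l, rfl⟩ := hy
  obtain ⟨s, hs⟩ := Int.even_mul_succ_self k
  obtain ⟨t, ht⟩ := Int.even_mul_succ_self l
  exact ⟨s - t, by linear_combination 4*hs - 4*ht⟩

lemma F2 {x y : ℤ} (hx : Even x) (hy : Even y) : (2:ℤ)^2 ∣ x^2 - y^2 := by
  obtain ⟨k, rfl⟩ := hx
  obtain ⟨l, rfl⟩ := hy
  exact ⟨k^2 - l^2, by ring⟩

lemma F3 {x y z w : ℤ} (hx : Even x) (hy : Even y) (hz : Even z) (hw : Even w) :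
    (2:ℤ)^2 ∣ x^2 + y^2 - z^2 - w^2 := by
  obtain ⟨k, rfl⟩ := hx; obtain ⟨l, rfl⟩ := hy
  obtain ⟨m, rfl⟩ := hz; obtain ⟨n, rfl⟩ := hw
  exact ⟨k^2 + l^2 - m^2 - n^2, by ring⟩

lemma F4 {x y z w : ℤ} (hx : Odd x) (hy : Odd y) (hz : Odd z) (hw : Odd w) :
    (2:ℤ)^3 ∣ x^2 + y^2 - z^2 - w^2 := by
  have h1 := F1 hx hz
  have h2 := F1 hy hw
  have := dvd_add h1 h2
  rw [show x^2 + y^2 - z^2 - w^2 = x^2 - z^2 + (y^2 - w^2) by ring]; exact this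

lemma F5 {x y z w : ℤ} (h : Even (x + y + z + w)) :
    Even (x^2 + y^2 - z^2 - w^2) := by
  obtain ⟨s, hs⟩ := h
  obtain ⟨a, ha⟩ := Int.even_mul_succ_self x
  obtain ⟨b, hb⟩ := Int.even_mul_succ_self y
  obtain ⟨c, hc⟩ := Int.even_mul_succ_self z
  obtain ⟨d, hd⟩ := Int.even_mul_succ_self w
  exact ⟨a + b - c - d - s + z + w, by linear_combination ha + hb - hc - hd - hs⟩

lemma sq_of_even {d : ℤ} (h : Even d) : (2:ℤ)^2 ∣ d^2 := by
  obtain ⟨t, rfl⟩ := h; exact ⟨t^2, by ring⟩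

lemma sq_of_dvd {d : ℤ} {i : ℕ} (h : (2:ℤ)^i ∣ d) : (2:ℤ)^(2*i) ∣ d^2 := by
  obtain ⟨t, rfl⟩ := h; exact ⟨t^2, by rw [two_mul, pow_add]; ring⟩

lemma assemble {X Y Z : ℤ} {i j k : ℕ} (hx : (2:ℤ)^i ∣ X) (hy : (2:ℤ)^j ∣ Y)
    (hz : (2:ℤ)^k ∣ Z) (h : 8 ≤ i + j + k) : (2:ℤ)^8 ∣ X * Y * Z := by
  have h1 : (2:ℤ)^8 ∣ 2^(i+j+k) := pow_dvd_pow 2 h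
  exact h1.trans (by rw [pow_add, pow_add]; exact mul_dvd_mul (mul_dvd_mul hx hy) hz)

lemma even_transfer {x p : ℤ} (h : Even (x - p)) : Even x ↔ Even p := Int.even_sub.mp h

lemma odd_transfer {x p : ℤ} (h : Even (x - p)) (hx : Odd x) : Odd p := by
  rw [← Int.not_even_iff_odd] at hx ⊢
  exact fun hp => hx ((even_transfer h).mpr hp)

lemma mixhalf (a b c e : ℤ) (h1 : Odd (a + b + c + e)) :
    (2:ℤ)^6 ∣ ((2*a)^2 - (2*b)^2) * ((2*c)^2 - (2*e)^2) := by
  have hexp : ((2*a)^2 - (2*b)^2) * ((2*c)^2 - (2*e)^2) = 16 * ((a^2-b^2) * (c^2-e^2)) := by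
    ring
  have h4 : (2:ℤ)^2 ∣ (a^2-b^2) * (c^2-e^2) := by
    rcases Int.even_or_odd a with ha | ha <;> rcases Int.even_or_odd b with hb | hb <;>
      rcases Int.even_or_odd c with hc | hc <;> rcases Int.even_or_odd e with he | he <;>
      first
        | exact dvd_mul_of_dvd_left (F2 ha hb) _
        | exact dvd_mul_of_dvd_right (F2 hc he) _
        | exact dvd_mul_of_dvd_left ((pow_dvd_pow 2 (by norm_num)).trans (F1 ha hb)) _
        | exact dvd_mul_of_dvd_right ((pow_dvd_pow 2 (by norm_num)).trans (F1 hc he)) _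
        | (exfalso; simp only [Int.even_iff, Int.odd_iff] at h1 ha hb hc he; omega)
  obtain ⟨w, hw⟩ := h4
  exact ⟨w, by rw [hexp, hw]; ring⟩

lemma key_dvd (u v U V p q P Q : ℤ)
    (hu : Even (u - p)) (hv : Even (v - q)) (hU : Even (U - P)) (hV : Even (V - Q))
    (h : Even (u + v + U + V)) :
    (2:ℤ)^8 ∣ ((u+v+U+V) * (u + v - U - V) * ((u - v + U - V) * (u - v - U + V))) *
      (p^2 + q^2 - P^2 - Q^2)^2 := by
  have aux : (2:ℤ)^8 ∣ ((u+v)^2 - (U+V)^2) * ((u-v)^2 - (U-V)^2) *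
      (p^2 + q^2 - P^2 - Q^2)^2 := by
    rcases Int.even_or_odd u with hu1 | hu1 <;> rcases Int.even_or_odd v with hv1 | hv1 <;>
      rcases Int.even_or_odd U with hU1 | hU1 <;> rcases Int.even_or_odd V with hV1 | hV1
    -- EEEE
    · have pe := (even_transfer hu).mp hu1
      have qe := (even_transfer hv).mp hv1
      have Pe := (even_transfer hU).mp hU1
      have Qe := (even_transfer hV).mp hV1
      exact assemble (F2 (hu1.add hv1) (hU1.add hV1)) (F2 (hu1.sub hv1) (hU1.sub hV1))
        (sq_of_dvd (F3 pe qe Pe Qe)) (by norm_num)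
    -- EEEO : contradiction
    · exfalso
      obtain ⟨k, rfl⟩ := hu1; obtain ⟨l, rfl⟩ := hv1
      obtain ⟨m, rfl⟩ := hU1; obtain ⟨n, rfl⟩ := hV1
      obtain ⟨t, ht⟩ := h; omega
    -- EEOE : contradiction
    · exfalso
      obtain ⟨k, rfl⟩ := hu1; obtain ⟨l, rfl⟩ := hv1
      obtain ⟨m, rfl⟩ := hU1; obtain ⟨n, rfl⟩ := hV1
      obtain ⟨t, ht⟩ := h; omega
    -- EEOO : mixhalf case
    · have pe := (even_transfer hu).mp hu1
      have qe := (even_transfer hv).mp hv1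
      have Po := odd_transfer hU hU1
      have Qo := odd_transfer hV hV1
      have hd2 := sq_of_even (F5 (((pe.add qe).add_odd Po).add_odd Qo))
      obtain ⟨k, rfl⟩ := hu1; obtain ⟨l, rfl⟩ := hv1
      obtain ⟨m, rfl⟩ := hU1; obtain ⟨n, rfl⟩ := hV1
      obtain ⟨w, hw⟩ := mixhalf (k+l) (m+n+1) (k-l) (m-n)
        ⟨k+m, by ring⟩
      have hL6 : (2:ℤ)^6 ∣ ((k+k+(l+l))^2 - ((2*m+1)+(2*n+1))^2) *
          ((k+k-(l+l))^2 - ((2*m+1)-(2*n+1))^2) := ⟨w, by linear_combination hw⟩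
      have := mul_dvd_mul hL6 hd2
      exact (by norm_num : (2:ℤ)^6 * 2^2 = 2^8) ▸ this
    -- EOEE : contradiction
    · exfalso
      obtain ⟨k, rfl⟩ := hu1; obtain ⟨l, rfl⟩ := hv1
      obtain ⟨m, rfl⟩ := hU1; obtain ⟨n, rfl⟩ := hV1
      obtain ⟨t, ht⟩ := h; omega
    -- EOEO : cross case
    · have pe := (even_transfer hu).mp hu1
      have qo := odd_transfer hv hv1
      have Pe := (even_transfer hU).mp hU1
      have Qo := odd_transfer hV hV1
      have hd2 := sq_of_even (F5 (((pe.add_odd qo).add_even Pe).add_odd Qo))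
      obtain ⟨k, rfl⟩ := hu1; obtain ⟨l, rfl⟩ := hv1
      obtain ⟨m, rfl⟩ := hU1; obtain ⟨n, rfl⟩ := hV1
      exact assemble (F1 ⟨k+l, by ring⟩ ⟨m+n, by ring⟩)
        (F1 ⟨k-l-1, by ring⟩ ⟨m-n-1, by ring⟩) hd2 (by norm_num)
    -- EOOE : cross case
    · have pe := (even_transfer hu).mp hu1
      have qo := odd_transfer hv hv1
      have Po := odd_transfer hU hU1
      have Qe := (even_transfer hV).mp hV1
      have hd2 := sq_of_even (F5 (((pe.add_odd qo).add_odd Po).add Qe))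
      obtain ⟨k, rfl⟩ := hu1; obtain ⟨l, rfl⟩ := hv1
      obtain ⟨m, rfl⟩ := hU1; obtain ⟨n, rfl⟩ := hV1
      exact assemble (F1 ⟨k+l, by ring⟩ ⟨m+n, by ring⟩)
        (F1 ⟨k-l-1, by ring⟩ ⟨m-n, by ring⟩) hd2 (by norm_num)
    -- EOOO : contradiction
    · exfalso
      obtain ⟨k, rfl⟩ := hu1; obtain ⟨l, rfl⟩ := hv1
      obtain ⟨m, rfl⟩ := hU1; obtain ⟨n, rfl⟩ := hV1
      obtain ⟨t, ht⟩ := h; omega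
    -- OEEE : contradiction
    · exfalso
      obtain ⟨k, rfl⟩ := hu1; obtain ⟨l, rfl⟩ := hv1
      obtain ⟨m, rfl⟩ := hU1; obtain ⟨n, rfl⟩ := hV1
      obtain ⟨t, ht⟩ := h; omega
    -- OEEO : cross case
    · have po := odd_transfer hu hu1
      have qe := (even_transfer hv).mp hv1
      have Pe := (even_transfer hU).mp hU1
      have Qo := odd_transfer hV hV1
      have hd2 := sq_of_even (F5 (((po.add_even qe).add_even Pe).add_odd Qo))
      obtain ⟨k, rfl⟩ := hu1; obtain ⟨l, rfl⟩ := hv1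
      obtain ⟨m, rfl⟩ := hU1; obtain ⟨n, rfl⟩ := hV1
      exact assemble (F1 ⟨k+l, by ring⟩ ⟨m+n, by ring⟩)
        (F1 ⟨k-l, by ring⟩ ⟨m-n-1, by ring⟩) hd2 (by norm_num)
    -- OEOE : cross case
    · have po := odd_transfer hu hu1
      have qe := (even_transfer hv).mp hv1
      have Po := odd_transfer hU hU1
      have Qe := (even_transfer hV).mp hV1
      have hd2 := sq_of_even (F5 (((po.add_even qe).add_odd Po).add Qe))
      obtain ⟨k, rfl⟩ := hu1; obtain ⟨l, rfl⟩ := hv1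
      obtain ⟨m, rfl⟩ := hU1; obtain ⟨n, rfl⟩ := hV1
      exact assemble (F1 ⟨k+l, by ring⟩ ⟨m+n, by ring⟩)
        (F1 ⟨k-l, by ring⟩ ⟨m-n, by ring⟩) hd2 (by norm_num)
    -- OEOO : contradiction
    · exfalso
      obtain ⟨k, rfl⟩ := hu1; obtain ⟨l, rfl⟩ := hv1
      obtain ⟨m, rfl⟩ := hU1; obtain ⟨n, rfl⟩ := hV1
      obtain ⟨t, ht⟩ := h; omega
    -- OOEE : mixhalf case
    · have po := odd_transfer hu hu1
      have qo := odd_transfer hv hv1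
      have Pe := (even_transfer hU).mp hU1
      have Qe := (even_transfer hV).mp hV1
      have hd2 := sq_of_even (F5 (((po.add_odd qo).add Pe).add Qe))
      obtain ⟨k, rfl⟩ := hu1; obtain ⟨l, rfl⟩ := hv1
      obtain ⟨m, rfl⟩ := hU1; obtain ⟨n, rfl⟩ := hV1
      obtain ⟨w, hw⟩ := mixhalf (k+l+1) (m+n) (k-l) (m-n)
        ⟨k+m, by ring⟩
      have hL6 : (2:ℤ)^6 ∣ (((2*k+1)+(2*l+1))^2 - ((m+m)+(n+n))^2) *
          (((2*k+1)-(2*l+1))^2 - ((m+m)-(n+n))^2) := ⟨w, by linear_combination hw⟩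
      have := mul_dvd_mul hL6 hd2
      exact (by norm_num : (2:ℤ)^6 * 2^2 = 2^8) ▸ this
    -- OOEO : contradiction
    · exfalso
      obtain ⟨k, rfl⟩ := hu1; obtain ⟨l, rfl⟩ := hv1
      obtain ⟨m, rfl⟩ := hU1; obtain ⟨n, rfl⟩ := hV1
      obtain ⟨t, ht⟩ := h; omega
    -- OOOE : contradiction
    · exfalso
      obtain ⟨k, rfl⟩ := hu1; obtain ⟨l, rfl⟩ := hv1
      obtain ⟨m, rfl⟩ := hU1; obtain ⟨n, rfl⟩ := hV1
      obtain ⟨t, ht⟩ := h; omega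
    -- OOOO
    · have po := odd_transfer hu hu1
      have qo := odd_transfer hv hv1
      have Po := odd_transfer hU hU1
      have Qo := odd_transfer hV hV1
      exact assemble (F2 (hu1.add_odd hv1) (hU1.add_odd hV1))
        (F2 (hu1.sub_odd hv1) (hU1.sub_odd hV1))
        (sq_of_dvd (F4 po qo Po Qo)) (by norm_num)
  obtain ⟨w, hw⟩ := aux
  exact ⟨w, by linear_combination hw⟩

lemma parity_even (u v U V p q P Q : ℤ)
    (hu : Even (u - p)) (hv : Even (v - q)) (hU : Even (U - P)) (hV : Even (V - Q))
    (hN : Even (((u+v+U+V) * (u + v - U - V) * ((u - v + U - V) * (u - v - U + V))) *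
      (p^2 + q^2 - P^2 - Q^2)^2)) : Even (u+v+U+V) := by
  by_contra hodd
  rw [Int.not_even_iff_odd] at hodd
  have hS : Odd (p+q+P+Q) := by
    have hdiff : Even ((u+v+U+V) - (p+q+P+Q)) := by
      obtain ⟨α,hα⟩ := hu; obtain ⟨β,hβ⟩ := hv; obtain ⟨γ,hγ⟩ := hU; obtain ⟨δ,hδ⟩ := hV
      exact ⟨α+β+γ+δ, by linarith⟩
    exact odd_transfer hdiff hodd
  have hd : Odd (p^2+q^2-P^2-Q^2) := by
    have hdiff : Even ((p+q+P+Q) - (p^2+q^2-P^2-Q^2)) := by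
      obtain ⟨a, ha⟩ := Int.even_mul_succ_self p
      obtain ⟨b, hb⟩ := Int.even_mul_succ_self q
      obtain ⟨c, hc⟩ := Int.even_mul_succ_self P
      obtain ⟨d, hd⟩ := Int.even_mul_succ_self Q
      exact ⟨p + q - a - b + c + d, by linear_combination - ha - hb + hc + hd⟩
    exact odd_transfer hdiff hS
  obtain ⟨k, hk⟩ := hodd
  have hL2 : Odd (u + v - U - V) := ⟨k - U - V, by linarith⟩
  have hL3 : Odd (u - v + U - V) := ⟨k - v - V, by linarith⟩
  have hL4 : Odd (u - v - U + V) := ⟨k - v - U, by linarith⟩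
  have hL1 : Odd (u+v+U+V) := ⟨k, hk⟩
  have hF : Odd ((((u+v+U+V)) * (u + v - U - V) * ((u - v + U - V) * (u - v - U + V))) *
      (p^2 + q^2 - P^2 - Q^2)^2) :=
    ((hL1.mul hL2).mul (hL3.mul hL4)).mul hd.pow
  exact (Int.not_odd_iff_even.mpr hN) hF

open DihedralGroup in
def fD8 (x0 x1 x2 x3 y0 y1 y2 y3 : ℤ) : DihedralGroup 4 → ℤ := fun g =>
  if g = r 0 then x0 else if g = r 1 then x1 else if g = r 2 then x2 else if g = r 3 then x3
  else if g = sr 0 then y0 else if g = sr 1 then y1 else if g = sr 2 then y2 else y3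

open DihedralGroup in
theorem even_detSet_Z2_D8 :
    {N : ℤ | Even N ∧ N ∈ detSet (Multiplicative (ZMod 2) × DihedralGroup 4)} =
      {N : ℤ | ∃ m : ℤ, N = 2 ^ 16 * m} := by
  ext N
  simp only [Set.mem_setOf_eq]
  constructor
  · rintro ⟨hev, a, rfl⟩
    have hfact := groupDet_Z2prod a
    rw [groupDet_D8, groupDet_D8] at hfact
    beta_reduce at hfact
    rw [hfact] at hev ⊢
    set x0 := a (1, r 0) with hx0
    set x1 := a (1, r 1) with hx1
    set x2 := a (1, r 2) with hx2
    set x3 := a (1, r 3) with hx3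
    set X0 := a (1, sr 0) with hX0
    set X1 := a (1, sr 1) with hX1
    set X2 := a (1, sr 2) with hX2
    set X3 := a (1, sr 3) with hX3
    set z0 := a (z2e, r 0) with hz0
    set z1 := a (z2e, r 1) with hz1
    set z2 := a (z2e, r 2) with hz2
    set z3 := a (z2e, r 3) with hz3
    set Z0 := a (z2e, sr 0) with hZ0
    set Z1 := a (z2e, sr 1) with hZ1
    set Z2 := a (z2e, sr 2) with hZ2
    set Z3 := a (z2e, sr 3) with hZ3
    have h1p : Even (((x0+z0)+(x2+z2)) - ((x0+z0)-(x2+z2))) := ⟨x2+z2, by ring⟩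
    have h2p : Even (((x1+z1)+(x3+z3)) - ((x1+z1)-(x3+z3))) := ⟨x3+z3, by ring⟩
    have h3p : Even (((X0+Z0)+(X2+Z2)) - ((X0+Z0)-(X2+Z2))) := ⟨X2+Z2, by ring⟩
    have h4p : Even (((X1+Z1)+(X3+Z3)) - ((X1+Z1)-(X3+Z3))) := ⟨X3+Z3, by ring⟩
    have h1m : Even (((x0-z0)+(x2-z2)) - ((x0-z0)-(x2-z2))) := ⟨x2-z2, by ring⟩
    have h2m : Even (((x1-z1)+(x3-z3)) - ((x1-z1)-(x3-z3))) := ⟨x3-z3, by ring⟩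
    have h3m : Even (((X0-Z0)+(X2-Z2)) - ((X0-Z0)-(X2-Z2))) := ⟨X2-Z2, by ring⟩
    have h4m : Even (((X1-Z1)+(X3-Z3)) - ((X1-Z1)-(X3-Z3))) := ⟨X3-Z3, by ring⟩
    have hdiff : Even (((x0+z0)+(x2+z2) + ((x1+z1)+(x3+z3)) + ((X0+Z0)+(X2+Z2)) + ((X1+Z1)+(X3+Z3)))
        - ((x0-z0)+(x2-z2) + ((x1-z1)+(x3-z3)) + ((X0-Z0)+(X2-Z2)) + ((X1-Z1)+(X3-Z3)))) :=
      ⟨z0+z2+z1+z3+Z0+Z2+Z1+Z3, by ring⟩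
    have hboth : Even ((x0+z0)+(x2+z2) + ((x1+z1)+(x3+z3)) + ((X0+Z0)+(X2+Z2)) + ((X1+Z1)+(X3+Z3)))
        ∧ Even ((x0-z0)+(x2-z2) + ((x1-z1)+(x3-z3)) + ((X0-Z0)+(X2-Z2)) + ((X1-Z1)+(X3-Z3))) := by
      rcases Int.even_mul.mp hev with hc | hc
      · have hSp := parity_even _ _ _ _ _ _ _ _ h1p h2p h3p h4p hc
        exact ⟨hSp, (even_transfer hdiff).mp hSp⟩
      · have hSm := parity_even _ _ _ _ _ _ _ _ h1m h2m h3m h4m hc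
        exact ⟨(even_transfer hdiff).mpr hSm, hSm⟩
    obtain ⟨c1, e1⟩ := key_dvd _ _ _ _ _ _ _ _ h1p h2p h3p h4p hboth.1
    obtain ⟨c2, e2⟩ := key_dvd _ _ _ _ _ _ _ _ h1m h2m h3m h4m hboth.2
    exact ⟨c1 * c2, by rw [e1, e2]; ring⟩
  · rintro ⟨m, rfl⟩
    refine ⟨⟨2^15 * m, by ring⟩, ?_⟩
    rcases Int.even_or_odd m with ⟨w, rfl⟩ | ⟨w, rfl⟩
    · refine ⟨fun p => if p.1 = 1 then fD8 (-w) (-w-1) 0 0 (-w-1) (-w) 0 0 p.2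
        else fD8 (1-w) (1-w) 1 0 (-w) (-w) 0 (-1) p.2, ?_⟩
      rw [groupDet_Z2prod, groupDet_D8, groupDet_D8]
      simp (config := { decide := true }) only [fD8]
      norm_num
      ring
    · refine ⟨fun p => if p.1 = 1 then fD8 w w 0 0 w w 0 0 p.2
        else fD8 (w+2) (w+1) 1 0 w (w+1) 0 (-1) p.2, ?_⟩
      rw [groupDet_Z2prod, groupDet_D8, groupDet_D8]
      simp (config := { decide := true }) only [fD8]
      norm_num
      ring
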